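/- Let n be even, L = F_{q^n}, C = F_{q^2}, F = F_q. The number of lines of the Desarguesian spread D = {Cx : x ∈ L*} fixed by the inversion j is exactly 2 if q is odd and 4 | n, and exactly 1 otherwise. -/

import Mathlib

open Submodule

lemma aux_cyclic_sq (Q : Type*) [Group Q] [Finite Q] [IsCyclic Q] :
    {y : Q | y ^ 2 = 1}.ncard = if 2 ∣ Nat.card Q then 2 else 1 := by
  obtain ⟨g, hg⟩ := IsCyclic.exists_generator (α := Q)
  have hm : orderOf g = Nat.card Q := orderOf_eq_card_of_forall_mem_zpowers hg
  have hmpos : 0 < Nat.card Q := Nat.card_pos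
  by_cases h2 : 2 ∣ Nat.card Q
  · rw [if_pos h2]
    have hset : {y : Q | y ^ 2 = 1} = {1, g ^ (Nat.card Q / 2)} := by
      ext y
      simp only [Set.mem_setOf_eq, Set.mem_insert_iff, Set.mem_singleton_iff]
      constructor
      · intro hy
        obtain ⟨k, hk⟩ := show y ∈ Submonoid.powers g from mem_powers_iff_mem_zpowers.mpr (hg y)
        dsimp only at hk
        have hdvd : Nat.card Q ∣ 2 * k := by
          rw [← hm]
          apply orderOf_dvd_of_pow_eq_one
          rw [pow_mul', hk, hy]
        have hhalf : Nat.card Q / 2 ∣ k := by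
          obtain ⟨c, hc⟩ := h2
          obtain ⟨d, hd⟩ := hdvd
          rw [hc, Nat.mul_div_cancel_left _ two_pos]
          refine ⟨d, ?_⟩
          have : 2 * k = 2 * (c * d) := by rw [hd, hc]; ring
          exact Nat.eq_of_mul_eq_mul_left two_pos this
        obtain ⟨t, rfl⟩ := hhalf
        rcases Nat.even_or_odd t with ht | ht
        · left
          obtain ⟨s, rfl⟩ := ht
          rw [← hk, show Nat.card Q / 2 * (s + s) = Nat.card Q / 2 * 2 * s by ring,
            Nat.div_mul_cancel h2, pow_mul, ← hm, pow_orderOf_eq_one, one_pow]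
        · right
          obtain ⟨s, rfl⟩ := ht
          rw [← hk, show Nat.card Q / 2 * (2 * s + 1) = Nat.card Q / 2 * 2 * s + Nat.card Q / 2 by ring,
            pow_add, Nat.div_mul_cancel h2, pow_mul, ← hm, pow_orderOf_eq_one, one_pow, one_mul]
      · rintro (rfl | rfl)
        · simp
        · rw [← pow_mul, Nat.div_mul_cancel h2, ← hm, pow_orderOf_eq_one]
    rw [hset, Set.ncard_pair]
    intro h
    have h1 : g ^ (Nat.card Q / 2) = 1 := h.symm
    have hdd := orderOf_dvd_of_pow_eq_one h1
    rw [hm] at hdd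
    have hlt : Nat.card Q / 2 < Nat.card Q := Nat.div_lt_self hmpos one_lt_two
    have hpos : 0 < Nat.card Q / 2 := Nat.div_pos (Nat.le_of_dvd hmpos h2) two_pos
    exact absurd (Nat.le_of_dvd hpos hdd) (not_le.mpr hlt)
  · rw [if_neg h2]
    have hs : {y : Q | y ^ 2 = 1} = {1} := by
      ext y
      simp only [Set.mem_setOf_eq, Set.mem_singleton_iff]
      constructor
      · intro hy
        have h1 : orderOf y ∣ 2 := orderOf_dvd_of_pow_eq_one hy
        have h2' : orderOf y ∣ Nat.card Q := orderOf_dvd_natCard y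
        have hco : Nat.Coprime 2 (Nat.card Q) :=
          (Nat.Prime.coprime_iff_not_dvd Nat.prime_two).mpr h2
        have : orderOf y ∣ 1 := by
          have := Nat.dvd_gcd h1 h2'
          rwa [Nat.Coprime.gcd_eq_one hco] at this
        rw [Nat.dvd_one] at this
        exact orderOf_eq_one_iff.mp this
      · rintro rfl; simp
    rw [hs, Set.ncard_singleton]

lemma span_eq_span_iff {L : Type*} [Field L] (C : Subfield L) {x y : L}
    (hx : x ≠ 0) (hy : y ≠ 0) :
    span C {x} = span C {y} ↔ ∃ c : L, c ∈ C ∧ c * x = y := by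
  constructor
  · intro h
    have : y ∈ span C {x} := h ▸ mem_span_singleton_self y
    obtain ⟨c, hc⟩ := mem_span_singleton.mp this
    exact ⟨(c : L), c.2, hc⟩
  · rintro ⟨c, hcC, rfl⟩
    have hc0 : c ≠ 0 := fun h => hy (by simp [h])
    have : (⟨c, hcC⟩ : C) • x = c * x := rfl
    rw [← this, span_singleton_smul_eq]
    exact isUnit_iff_ne_zero.mpr (fun h => hc0 (congrArg Subtype.val h))

lemma span_inv_iff {L : Type*} [Field L] (C : Subfield L) {x : L} (hx : x ≠ 0) :
    span C {x} = span C {x⁻¹} ↔ x ^ 2 ∈ C := by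
  rw [span_eq_span_iff C hx (inv_ne_zero hx)]
  constructor
  · rintro ⟨c, hcC, hc⟩
    have hc0 : c ≠ 0 := by
      rintro rfl
      exact inv_ne_zero hx (by simpa using hc.symm)
    have hx2 : x ^ 2 = c⁻¹ := by
      field_simp
      have := congrArg (· * x) hc
      simpa [mul_assoc, inv_mul_cancel₀ hx, sq, mul_comm, mul_left_comm] using this
    rw [hx2]
    exact C.inv_mem hcC
  · intro h
    refine ⟨(x ^ 2)⁻¹, C.inv_mem h, ?_⟩
    field_simp

theorem stmt7 (q n : ℕ) (hq : IsPrimePow q) (hn : 2 ≤ n) (hneven : Even n)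
    (L : Type*) [Field L] [Fintype L] (F C : Subfield L) (hFC : F ≤ C)
    (hL : Nat.card L = q ^ n) (hF : Nat.card F = q) (hC : Nat.card C = q ^ 2) :
    {S : Submodule C L | ∃ x : L, x ≠ 0 ∧ S = Submodule.span C {x} ∧
        Submodule.span C {x} = Submodule.span C {x⁻¹}}.ncard
      = if Odd q ∧ 4 ∣ n then 2 else 1 := by
  classical
  have hq2 : 2 ≤ q := hq.two_le
  let C' : Subgroup Lˣ :=
    { carrier := {u : Lˣ | (u : L) ∈ C}
      mul_mem' := fun ha hb => C.mul_mem ha hb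
      one_mem' := C.one_mem
      inv_mem' := fun ha => by simpa using C.inv_mem ha }
  have hmem : ∀ u : Lˣ, u ∈ C' ↔ (u : L) ∈ C := fun u => Iff.rfl
  have hQcyc : IsCyclic (Lˣ ⧸ C') :=
    isCyclic_of_surjective (QuotientGroup.mk' C') (QuotientGroup.mk'_surjective C')
  have key : ∀ u v : Lˣ, span C {(u : L)} = span C {(v : L)} ↔
      (QuotientGroup.mk u : Lˣ ⧸ C') = QuotientGroup.mk v := by
    intro u v
    rw [QuotientGroup.eq, hmem, span_eq_span_iff C u.ne_zero v.ne_zero]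
    constructor
    · rintro ⟨c, hcC, hc⟩
      have : ((u⁻¹ * v : Lˣ) : L) = c := by
        push_cast
        field_simp [← hc]
        rw [← hc]; ring
      rwa [this]
    · intro h
      refine ⟨((u⁻¹ * v : Lˣ) : L), h, ?_⟩
      push_cast
      field_simp
  have hsq : ∀ y : Lˣ ⧸ C', y ^ 2 = 1 ↔ ((y.out : L)) ^ 2 ∈ C := by
    intro y
    conv_lhs => rw [← QuotientGroup.out_eq' y]
    rw [← QuotientGroup.mk_pow, QuotientGroup.eq_one_iff, hmem]
    push_cast
    rfl
  -- the bijection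
  have hcard1 : {S : Submodule C L | ∃ x : L, x ≠ 0 ∧ S = span C {x} ∧
      span C {x} = span C {x⁻¹}}.ncard = {y : Lˣ ⧸ C' | y ^ 2 = 1}.ncard := by
    rw [← Nat.card_coe_set_eq, ← Nat.card_coe_set_eq]
    apply Nat.card_congr
    apply Equiv.symm
    refine Equiv.ofBijective (fun y => ⟨span C {((y.1.out : Lˣ) : L)}, ?_⟩) ⟨?_, ?_⟩
    · refine ⟨((y.1.out : Lˣ) : L), (y.1.out : Lˣ).ne_zero, rfl, ?_⟩
      rw [span_inv_iff C (y.1.out : Lˣ).ne_zero]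
      exact (hsq y.1).mp y.2
    · rintro ⟨y1, hy1⟩ ⟨y2, hy2⟩ h
      have h' := congrArg Subtype.val h
      simp only at h'
      have h2 := (key _ _).mp h'
      rw [QuotientGroup.out_eq' y1, QuotientGroup.out_eq' y2] at h2
      exact Subtype.ext h2
    · rintro ⟨S, x, hx0, rfl, hspan⟩
      have hx2 : x ^ 2 ∈ C := (span_inv_iff C hx0).mp hspan
      have hy : ((QuotientGroup.mk (Units.mk0 x hx0) : Lˣ ⧸ C')) ^ 2 = 1 := by
        rw [← QuotientGroup.mk_pow, QuotientGroup.eq_one_iff, hmem]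
        push_cast
        exact hx2
      refine ⟨⟨QuotientGroup.mk (Units.mk0 x hx0), hy⟩, ?_⟩
      apply Subtype.ext
      show span C {(((QuotientGroup.mk (Units.mk0 x hx0) : Lˣ ⧸ C').out : Lˣ) : L)} = span C {x}
      have h3 : span C {(((QuotientGroup.mk (Units.mk0 x hx0) : Lˣ ⧸ C').out : Lˣ) : L)}
          = span C {((Units.mk0 x hx0 : Lˣ) : L)} :=
        (key _ _).mpr (by rw [QuotientGroup.out_eq'])
      simpa using h3
  -- cardinalities
  have hC'card : Nat.card C' = q ^ 2 - 1 := by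
    have e : C' ≃ Cˣ :=
      { toFun := fun u => Units.mk0 (⟨((u : Lˣ) : L), u.2⟩ : C)
          (by simp [Subtype.ext_iff, Units.ne_zero])
        invFun := fun c => ⟨Units.mk0 ((c : C) : L)
          (by simpa [Subtype.ext_iff] using c.ne_zero), (c : C).2⟩
        left_inv := fun u => by ext; rfl
        right_inv := fun c => by ext; rfl }
    rw [Nat.card_congr e, Nat.card_units, hC]
  have hLucard : Nat.card Lˣ = q ^ n - 1 := by rw [Nat.card_units, hL]
  have hprod := Subgroup.card_eq_card_quotient_mul_card_subgroup C'
  rw [hLucard, hC'card] at hprod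
  -- geometric sum
  obtain ⟨k, hk⟩ := hneven
  have hkn : n = 2 * k := by omega
  have hk1 : 1 ≤ k := by omega
  set M : ℕ := ∑ i ∈ Finset.range k, (q ^ 2) ^ i with hM
  have hgeom : M * (q ^ 2 - 1) = q ^ n - 1 := by
    have hZ : (M : ℤ) * ((q : ℤ) ^ 2 - 1) = (q : ℤ) ^ n - 1 := by
      have := geom_sum_mul ((q : ℤ) ^ 2) k
      rw [← pow_mul, ← hkn] at this
      rw [hM]
      push_cast
      exact this
    have h1 : (1 : ℕ) ≤ q ^ 2 := Nat.one_le_pow _ _ (by omega)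
    have h2 : (1 : ℕ) ≤ q ^ n := Nat.one_le_pow _ _ (by omega)
    have : ((M * (q ^ 2 - 1) : ℕ) : ℤ) = ((q ^ n - 1 : ℕ) : ℤ) := by
      push_cast [h1, h2]
      exact hZ
    exact_mod_cast this
  have hQcard : Nat.card (Lˣ ⧸ C') = M := by
    have hpos : 0 < q ^ 2 - 1 := by
      have : 4 ≤ q ^ 2 := by nlinarith
      omega
    apply Nat.eq_of_mul_eq_mul_right hpos
    rw [hgeom, ← hprod]
  -- parity
  have hpar : (2 ∣ M) ↔ (Odd q ∧ 4 ∣ n) := by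
    rw [← ZMod.natCast_eq_zero_iff]
    rcases Nat.even_or_odd q with hqe | hqo
    · have hq0 : (q : ZMod 2) = 0 := by
        rw [ZMod.natCast_eq_zero_iff]
        exact hqe.two_dvd
      have : (M : ZMod 2) = 1 := by
        rw [hM]
        push_cast
        rw [hq0, show ((0 : ZMod 2) ^ 2) = 0 by norm_num, zero_geom_sum,
          if_neg (by omega : ¬ k = 0)]
      rw [this]
      simp only [one_ne_zero, false_iff]
      rintro ⟨hqodd, -⟩
      exact (Nat.not_odd_iff_even.mpr hqe) hqodd
    · have hq1 : (q : ZMod 2) = 1 := by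
        have h' : ((q % 2 : ℕ) : ZMod 2) = (q : ZMod 2) := ZMod.natCast_mod q 2
        rw [← h', Nat.odd_iff.mp hqo, Nat.cast_one]
      have hMk : (M : ZMod 2) = (k : ZMod 2) := by
        rw [hM]
        push_cast
        rw [hq1]
        simp
      rw [hMk]
      rw [ZMod.natCast_eq_zero_iff]
      constructor
      · intro h2k
        exact ⟨hqo, by omega⟩
      · rintro ⟨-, h4⟩
        omega
  rw [hcard1, aux_cyclic_sq _, hQcard, if_congr hpar rfl rfl]
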